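/- Let F be a face of the staircase complex 𝔅(P,n) whose projection onto P is surjective. Then there exists a unique isotone map φ ∈ Hom(P,[n]) with Γφ ⊆ F ⊆ T_*(φ); moreover this φ is given by φ(p) = max{ i : (p,i) ∈ F }. Consequently the staircase faces with surjective projection onto P are the disjoint union of the intervals [Γφ, T_*(φ)] as φ ranges over Hom(P,[n]). -/
import Mathlib


variable {P : Type*} [PartialOrder P] [Fintype P]

/-- `T_*(φ) = {(p,i) | φ q ≤ i ≤ φ p for all q < p}`. -/
def Tstar {n : ℕ} (φ : P → Fin n) : Set (P × Fin n) :=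
  {x | x.2 ≤ φ x.1 ∧ ∀ q : P, q < x.1 → φ q ≤ x.2}

/-- The graph `Γφ = {(p, φ p) | p ∈ P}` of a map φ : P → [n]. -/
def graphOf {n : ℕ} (φ : P → Fin n) : Set (P × Fin n) :=
  {x | x.2 = φ x.1}

/-- A staircase face is a subset of P × [n] containing no pair (p,i), (q,j) with
p < q in P and i > j in [n]; these are the faces of the staircase complex 𝔅(P,n). -/
def IsStaircaseFace {n : ℕ} (F : Set (P × Fin n)) : Prop :=
  ∀ x ∈ F, ∀ y ∈ F, x.1 < y.1 → ¬ y.2 < x.2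

/-- Let F be a face of the staircase complex 𝔅(P,n) whose projection onto P is surjective.
Then there is a unique isotone map φ with Γφ ⊆ F ⊆ T_*(φ); moreover any such φ is given by
φ(p) = max{i : (p,i) ∈ F}.  Hence the staircase faces with surjective projection onto P are
the disjoint union of the intervals [Γφ, T_*(φ)], φ ∈ Hom(P,[n]). -/
theorem stmt6 {n : ℕ} (F : Set (P × Fin n)) (hF : IsStaircaseFace F)
    (hsurj : ∀ p : P, ∃ i, (p, i) ∈ F) :
    (∃! φ : P → Fin n, Monotone φ ∧ graphOf φ ⊆ F ∧ F ⊆ Tstar φ) ∧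
      (∀ φ : P → Fin n, Monotone φ → graphOf φ ⊆ F → F ⊆ Tstar φ →
        ∀ p : P, (p, φ p) ∈ F ∧ ∀ i : Fin n, (p, i) ∈ F → i ≤ φ p) := by
  classical
  set S : P → Finset (Fin n) := fun p => Finset.univ.filter (fun i => (p, i) ∈ F) with hS
  have hne : ∀ p, (S p).Nonempty := by
    intro p
    obtain ⟨i, hi⟩ := hsurj p
    exact ⟨i, by simp [hS, hi]⟩
  set φ : P → Fin n := fun p => (S p).max' (hne p) with hφ
  have hmemφ : ∀ p, (p, φ p) ∈ F := by
    intro p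
    have := (S p).max'_mem (hne p)
    simpa [hS] using this
  have hmax : ∀ p i, (p, i) ∈ F → i ≤ φ p := by
    intro p i hi
    exact (S p).le_max' i (by simp [hS, hi])
  have hmono : Monotone φ := by
    intro p q hpq
    rcases eq_or_lt_of_le hpq with rfl | hlt
    · exact le_rfl
    · exact le_of_not_gt (hF (p, φ p) (hmemφ p) (q, φ q) (hmemφ q) hlt)
  have hgraph : graphOf φ ⊆ F := by
    rintro ⟨p, i⟩ hi
    simp only [graphOf, Set.mem_setOf_eq] at hi
    subst hi
    exact hmemφ p
  have hT : F ⊆ Tstar φ := by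
    rintro ⟨p, i⟩ hi
    refine ⟨hmax p i hi, fun q hq => ?_⟩
    exact le_of_not_gt (hF (q, φ q) (hmemφ q) (p, i) hi hq)
  constructor
  · refine ⟨φ, ⟨hmono, hgraph, hT⟩, ?_⟩
    rintro ψ ⟨hmψ, hgψ, hTψ⟩
    funext p
    have h1 : ψ p ≤ φ p := hmax p (ψ p) (hgψ rfl)
    have h2 : φ p ≤ ψ p := (hTψ (hmemφ p)).1
    exact le_antisymm h1 h2
  · intro ψ _ hgψ hTψ p
    exact ⟨hgψ rfl, fun i hi => (hTψ hi).1⟩
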